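/- arXiv:0812.4701 — 5 statements merged into one kernel-verified Lean document; each statement's English description precedes it below -/
import Mathlib

section
/- Let Ω ⊆ ℝ^p be open and let L : Ω → ℝ be twice continuously differentiable. Suppose there is an integer r < p such that the Hessian matrix (∂²L/∂θ_i∂θ_j(θ))_{i,j=1}^p has rank exactly r at every θ ∈ Ω. Then no turning point of L in Ω is isolated: for every θ₀ ∈ Ω with ∇L(θ₀) = 0 and every neighborhood U of θ₀, there exists δ ∈ U with δ ≠ θ₀, ∇L(δ) = 0, and L(δ) = L(θ₀). -/
open Module LinearMap Set Matrix

lemma aux_rank {p : ℕ} (f : (Fin p → ℝ) →ₗ[ℝ] (Fin p → ℝ)) :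
    (LinearMap.toMatrix' f).rank = Module.finrank ℝ (LinearMap.range f) := by
  rw [Matrix.rank, show (LinearMap.toMatrix' f).mulVecLin = f by
    rw [← Matrix.toLin'_apply', Matrix.toLin'_toMatrix']]

lemma aux_clm_zero {p : ℕ} (f : (Fin p → ℝ) →L[ℝ] ℝ)
    (h : ∀ j, f (Pi.single j 1) = 0) : f = 0 := by
  apply ContinuousLinearMap.coe_injective
  apply Basis.ext (Pi.basisFun ℝ (Fin p))
  intro j
  simp [h j]

set_option maxHeartbeats 1000000 in
/-- Theorem 1(iii), turning-point assertion: if the Hessian of a C² function `L` has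
constant rank `r < p` throughout the open set `Ω`, then no turning point of `L` in `Ω`
is isolated: every neighborhood of a turning point `θ₀` contains a different turning
point `δ` with the same value `L δ = L θ₀`. -/
theorem stmt_3 {p r : ℕ} (hr : r < p) {Ω : Set (Fin p → ℝ)} (hΩ : IsOpen Ω)
    (L : (Fin p → ℝ) → ℝ) (hL : ContDiffOn ℝ 2 L Ω)
    (hH : ∀ θ ∈ Ω, (Matrix.of fun i j : Fin p =>
        fderiv ℝ (fun θ' => fderiv ℝ L θ' (Pi.single j 1)) θ (Pi.single i 1)).rank = r) :
    ∀ θ₀ ∈ Ω, fderiv ℝ L θ₀ = 0 →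
      ∀ U ∈ nhds θ₀, ∃ δ ∈ U, δ ≠ θ₀ ∧ fderiv ℝ L δ = 0 ∧ L δ = L θ₀ := by
  classical
  intro θ₀ hθ₀ hgrad U hU
  set G : (Fin p → ℝ) → (Fin p → ℝ) := fun x j => fderiv ℝ L x (Pi.single j 1) with hGdef
  have hfd1 : ContDiffOn ℝ 1 (fun y => fderiv ℝ L y) Ω :=
    hL.fderiv_of_isOpen hΩ (by norm_num)
  have hG1 : ContDiffOn ℝ 1 G Ω := by
    apply contDiffOn_pi.2
    intro j
    exact (ContinuousLinearMap.apply ℝ ℝ (Pi.single j 1)).contDiff.comp_contDiffOn hfd1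
  have hGdiff : ∀ x ∈ Ω, DifferentiableAt ℝ G x := fun x hx =>
    (hG1.contDiffAt (hΩ.mem_nhds hx)).differentiableAt one_ne_zero
  have hGcomp : ∀ x ∈ Ω, ∀ i j, fderiv ℝ G x (Pi.single i 1) j
      = fderiv ℝ (fun θ' => fderiv ℝ L θ' (Pi.single j 1)) x (Pi.single i 1) := by
    intro x hx i j
    have hdc : ∀ j : Fin p, DifferentiableAt ℝ (fun y => fderiv ℝ L y (Pi.single j 1)) x :=
      fun j => differentiableAt_pi.1 (hGdiff x hx) j
    have : fderiv ℝ G x = ContinuousLinearMap.pi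
        (fun j => fderiv ℝ (fun y => fderiv ℝ L y (Pi.single j 1)) x) := fderiv_pi hdc
    rw [this]
    rfl
  have hrank : ∀ x ∈ Ω,
      Module.finrank ℝ (LinearMap.range
        ((fderiv ℝ G x : (Fin p → ℝ) →ₗ[ℝ] (Fin p → ℝ)))) = r := by
    intro x hx
    have h2 : LinearMap.toMatrix' ((fderiv ℝ G x : (Fin p → ℝ) →ₗ[ℝ] (Fin p → ℝ)))
        = (Matrix.of fun i j : Fin p =>
        fderiv ℝ (fun θ' => fderiv ℝ L θ' (Pi.single j 1)) x (Pi.single i 1))ᵀ := by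
      ext i j
      rw [LinearMap.toMatrix'_apply]
      have : (fun j' => if j' = j then (1:ℝ) else 0) = Pi.single j 1 := by
        funext j'; simp [Pi.single_apply]
      simpa [Matrix.transpose_apply] using hGcomp x hx j i
    rw [← aux_rank, h2, Matrix.rank_transpose, hH x hx]
  -- linear algebra setup at θ₀
  set Hx : (Fin p → ℝ) → ((Fin p → ℝ) →ₗ[ℝ] (Fin p → ℝ)) :=
    fun x => (fderiv ℝ G x : (Fin p → ℝ) →ₗ[ℝ] (Fin p → ℝ)) with hHxdef
  set K := LinearMap.ker (Hx θ₀) with hKdef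
  obtain ⟨K', hKc⟩ := Submodule.exists_isCompl K
  set Qp := K.linearProjOfIsCompl K' hKc with hQpdef
  set Q : (Fin p → ℝ) →ₗ[ℝ] (Fin p → ℝ) := K.subtype ∘ₗ Qp with hQdef
  have hQmemK : ∀ v, Q v ∈ K := fun v => (Qp v).2
  have hQleft : ∀ v ∈ K, Q v = v := by
    intro v hv
    have h1 : Qp v = ⟨v, hv⟩ := Submodule.linearProjOfIsCompl_apply_left hKc ⟨v, hv⟩
    simp [hQdef, h1]
  have hQright : ∀ v ∈ K', Q v = 0 := by
    intro v hv
    have h1 : Qp v = 0 := Submodule.linearProjOfIsCompl_apply_right' hKc hv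
    simp [hQdef, h1]
  have hdecomp : ∀ v, v - Q v ∈ K' := by
    intro v
    obtain ⟨a, ha, b, hb, hab⟩ := Submodule.mem_sup.1
      (by rw [hKc.sup_eq_top]; trivial : v ∈ K ⊔ K')
    have : Q v = a := by
      rw [← hab, map_add, hQleft a ha, hQright b hb, add_zero]
    rw [this, ← hab]
    simpa using hb
  set f : K' →ₗ[ℝ] (Fin p → ℝ) := (Hx θ₀) ∘ₗ K'.subtype with hfdef
  have hfinj : Function.Injective f := by
    rw [← LinearMap.ker_eq_bot]
    rw [Submodule.eq_bot_iff]
    rintro ⟨x, hx⟩ hker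
    have hxK : x ∈ K := by
      simpa [hKdef, LinearMap.mem_ker] using congrArg _root_.id
        (show Hx θ₀ x = 0 from hker)
    have := Submodule.disjoint_def.1 hKc.disjoint x hxK hx
    simpa using this
  set W := LinearMap.range f with hWdef
  set e := LinearEquiv.ofInjective f hfinj with hedef
  obtain ⟨W₂, hWc⟩ := Submodule.exists_isCompl W
  set Pw := W.linearProjOfIsCompl W₂ hWc with hPwdef
  set A : (Fin p → ℝ) →ₗ[ℝ] (Fin p → ℝ) :=
    K'.subtype ∘ₗ ((e.symm : W →ₗ[ℝ] K') ∘ₗ Pw) with hAdef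
  have hAmemK' : ∀ v, A v ∈ K' := fun v => (e.symm (Pw v)).2
  have hQA : ∀ v, Q (A v) = 0 := fun v => hQright _ (hAmemK' v)
  have hAH : ∀ u, u ∈ K' → A (Hx θ₀ u) = u := by
    intro u hu
    have h1 : Hx θ₀ u = f ⟨u, hu⟩ := rfl
    have h2 : Pw (f ⟨u, hu⟩) = ⟨f ⟨u, hu⟩, LinearMap.mem_range_self f ⟨u, hu⟩⟩ :=
      Submodule.linearProjOfIsCompl_apply_left hWc ⟨f ⟨u, hu⟩, LinearMap.mem_range_self f ⟨u, hu⟩⟩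
    have h3 : e.symm ⟨f ⟨u, hu⟩, LinearMap.mem_range_self f ⟨u, hu⟩⟩ = ⟨u, hu⟩ := by
      rw [LinearEquiv.symm_apply_eq]
      rfl
    simp [hAdef, h1, h2, h3]
  have hkey : ∀ v, A (Hx θ₀ v) + Q v = v := by
    intro v
    have hb := hdecomp v
    have h1 : Hx θ₀ v = Hx θ₀ (v - Q v) := by
      have h0 : Hx θ₀ (Q v) = 0 := LinearMap.mem_ker.1 (hQmemK v)
      rw [map_sub, h0, sub_zero]
    rw [h1, hAH _ hb, sub_add_cancel]
  -- dimensions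
  have hp : Module.finrank ℝ (Fin p → ℝ) = p := by
    simp [Module.finrank_fintype_fun_eq_card]
  have hKdim : Module.finrank ℝ K + r = p := by
    have h1 := LinearMap.finrank_range_add_finrank_ker (Hx θ₀)
    rw [hrank θ₀ hθ₀, hp] at h1
    rw [hKdef]
    omega
  -- nonzero kernel vector
  obtain ⟨w, hwK, hw0⟩ : ∃ w, w ∈ K ∧ w ≠ 0 := by
    by_contra hcon
    push_neg at hcon
    have hbot : K = ⊥ := by
      rw [Submodule.eq_bot_iff]
      intro x hx
      by_contra hne
      exact hne (hcon x hx)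
    rw [hbot, finrank_bot] at hKdim
    omega
  -- continuous linear maps and Φ
  set Ac := LinearMap.toContinuousLinearMap A with hAcdef
  set Qc := LinearMap.toContinuousLinearMap Q with hQcdef
  have hAc : ⇑Ac = ⇑A := LinearMap.coe_toContinuousLinearMap' A
  have hQc : ⇑Qc = ⇑Q := LinearMap.coe_toContinuousLinearMap' Q
  set Φ : (Fin p → ℝ) → (Fin p → ℝ) := fun x => Ac (G x) + Qc x with hΦdef
  set DΦ : (Fin p → ℝ) → ((Fin p → ℝ) →L[ℝ] (Fin p → ℝ)) :=
    fun x => (Ac.comp (fderiv ℝ G x)) + Qc with hDΦdef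
  have hDΦapp : ∀ x v, DΦ x v = A (fderiv ℝ G x v) + Q v := by
    intro x v
    simp [hDΦdef, hAc, hQc]
  have hΦfd : ∀ x ∈ Ω, HasFDerivAt Φ (DΦ x) x := by
    intro x hx
    exact ((Ac.hasFDerivAt.comp x (hGdiff x hx).hasFDerivAt).add Qc.hasFDerivAt)
  have hG0 : G θ₀ = 0 := by
    funext j
    simp [hGdef, hgrad]
  have hDΦ0 : DΦ θ₀ = ContinuousLinearMap.id ℝ (Fin p → ℝ) := by
    refine ContinuousLinearMap.ext fun v => ?_
    rw [hDΦapp]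
    exact hkey v
  have hGs : HasStrictFDerivAt G (fderiv ℝ G θ₀) θ₀ :=
    (hG1.contDiffAt (hΩ.mem_nhds hθ₀)).hasStrictFDerivAt one_ne_zero
  have hstrict : HasStrictFDerivAt Φ (DΦ θ₀) θ₀ :=
    (Ac.hasStrictFDerivAt.comp θ₀ hGs).add Qc.hasStrictFDerivAt
  have hstrict' : HasStrictFDerivAt Φ
      ((ContinuousLinearEquiv.refl ℝ (Fin p → ℝ) : (Fin p → ℝ) ≃L[ℝ] (Fin p → ℝ)) :
        (Fin p → ℝ) →L[ℝ] (Fin p → ℝ)) θ₀ := by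
    rw [show ((ContinuousLinearEquiv.refl ℝ (Fin p → ℝ) : (Fin p → ℝ) ≃L[ℝ] (Fin p → ℝ)) :
        (Fin p → ℝ) →L[ℝ] (Fin p → ℝ)) = DΦ θ₀ from by rw [hDΦ0]; rfl]
    exact hstrict
  set Φloc := hstrict'.toOpenPartialHomeomorph Φ with hΦlocdef
  have hcoe : ⇑Φloc = Φ := hstrict'.toOpenPartialHomeomorph_coe
  have hsrc : θ₀ ∈ Φloc.source := hstrict'.mem_toOpenPartialHomeomorph_source
  -- open set where DΦ is invertible
  have hDcont : ContinuousOn DΦ Ω := by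
    have h1 : ContinuousOn (fun x => fderiv ℝ G x) Ω :=
      hG1.continuousOn_fderiv_of_isOpen hΩ le_rfl
    have h2 : Continuous (fun T : (Fin p → ℝ) →L[ℝ] (Fin p → ℝ) => Ac.comp T + Qc) := by
      exact ((ContinuousLinearMap.compL ℝ (Fin p → ℝ) (Fin p → ℝ) (Fin p → ℝ)
        Ac).continuous.add continuous_const)
    exact h2.comp_continuousOn h1
  set V₀ := Ω ∩ DΦ ⁻¹' {T | IsUnit T} with hV₀def
  have hV₀open : IsOpen V₀ := hDcont.isOpen_inter_preimage hΩ Units.isOpen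
  have hθ₀V₀ : θ₀ ∈ V₀ := by
    refine ⟨hθ₀, ?_⟩
    show IsUnit (DΦ θ₀)
    rw [hDΦ0, ← ContinuousLinearMap.one_def]
    exact isUnit_one
  -- kernel control at points of V₀
  have hker : ∀ x ∈ V₀, ∀ v, A (fderiv ℝ G x v) = 0 → fderiv ℝ G x v = 0 := by
    rintro x ⟨hxΩ, hxu⟩ v hv
    obtain ⟨u, hu⟩ := (hxu : IsUnit (DΦ x))
    have hsurj : ∀ y, ∃ z, A (Hx x z) + Q z = y := by
      intro y
      refine ⟨(↑u⁻¹ : (Fin p → ℝ) →L[ℝ] (Fin p → ℝ)) y, ?_⟩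
      have h1 := congrArg (fun T : (Fin p → ℝ) →L[ℝ] (Fin p → ℝ) => T y) u.mul_inv
      simp only [ContinuousLinearMap.mul_apply, ContinuousLinearMap.one_apply] at h1
      rw [hu, hDΦapp] at h1
      exact h1
    have hsup : LinearMap.range (A ∘ₗ Hx x) ⊔ K = ⊤ := by
      rw [eq_top_iff]
      intro y _
      obtain ⟨z, hz⟩ := hsurj y
      exact Submodule.mem_sup.2 ⟨A (Hx x z), ⟨z, rfl⟩, Q z, hQmemK z, hz⟩
    have hrkH : Module.finrank ℝ (LinearMap.range (Hx x)) = r := hrank x hxΩ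
    have h1 : r ≤ Module.finrank ℝ (LinearMap.range (A ∘ₗ Hx x)) := by
      have h2 := Submodule.finrank_sup_add_finrank_inf_eq (LinearMap.range (A ∘ₗ Hx x)) K
      rw [hsup, finrank_top, hp] at h2
      omega
    have h3 : Module.finrank ℝ (LinearMap.ker (A ∘ₗ Hx x))
        ≤ Module.finrank ℝ (LinearMap.ker (Hx x)) := by
      have h4 := LinearMap.finrank_range_add_finrank_ker (A ∘ₗ Hx x)
      have h5 := LinearMap.finrank_range_add_finrank_ker (Hx x)
      rw [hp] at h4 h5
      omega
    have h6 : LinearMap.ker (Hx x) = LinearMap.ker (A ∘ₗ Hx x) :=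
      Submodule.eq_of_le_of_finrank_le (LinearMap.ker_le_ker_comp (Hx x) A) h3
    have h7 : v ∈ LinearMap.ker (A ∘ₗ Hx x) := by
      rw [LinearMap.mem_ker]
      exact hv
    rw [← h6] at h7
    exact LinearMap.mem_ker.1 h7
  -- the curve
  set a : ℝ → (Fin p → ℝ) := fun t => Φ θ₀ + t • w with hadef
  have hacont : Continuous a := continuous_const.add (continuous_id.smul continuous_const)
  set γ : ℝ → (Fin p → ℝ) := fun t => Φloc.symm (a t) with hγdef
  have ha0 : a 0 = Φ θ₀ := by simp [hadef]
  have hΦθ₀target : Φ θ₀ ∈ Φloc.target := by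
    have := Φloc.map_source hsrc
    rwa [hcoe] at this
  have hγ0 : γ 0 = θ₀ := by
    have h1 := Φloc.left_inv hsrc
    rw [hcoe] at h1
    simp only [hγdef, ha0]
    exact h1
  set T₀ := a ⁻¹' Φloc.target with hT₀def
  have hT₀open : IsOpen T₀ := Φloc.open_target.preimage hacont
  have h0T₀ : (0:ℝ) ∈ T₀ := by
    simp only [hT₀def, Set.mem_preimage, ha0]
    exact hΦθ₀target
  have hγcontOn : ContinuousOn γ T₀ := by
    intro t ht
    exact ((Φloc.symm.continuousAt ht).comp hacont.continuousAt).continuousWithinAt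
  set Vall := V₀ ∩ Φloc.source ∩ interior U with hValldef
  have hVallopen : IsOpen Vall :=
    (hV₀open.inter Φloc.open_source).inter isOpen_interior
  have hθ₀Vall : θ₀ ∈ Vall :=
    ⟨⟨hθ₀V₀, hsrc⟩, mem_interior_iff_mem_nhds.2 hU⟩
  set S := T₀ ∩ γ ⁻¹' Vall with hSdef
  have hSopen : IsOpen S := hγcontOn.isOpen_inter_preimage hT₀open hVallopen
  have h0S : (0:ℝ) ∈ S := ⟨h0T₀, by simp only [Set.mem_preimage, hγ0]; exact hθ₀Vall⟩
  obtain ⟨c, hc0, hball⟩ := Metric.isOpen_iff.1 hSopen 0 h0S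
  set I := Metric.ball (0:ℝ) c with hIdef
  have hmem : ∀ t ∈ I, γ t ∈ V₀ ∧ γ t ∈ Φloc.source ∧ γ t ∈ interior U ∧ a t ∈ Φloc.target := by
    intro t ht
    obtain ⟨h1, h2⟩ := hball ht
    exact ⟨h2.1.1, h2.1.2, h2.2, h1⟩
  have hΦγ : ∀ t ∈ I, Φ (γ t) = a t := by
    intro t ht
    have := Φloc.right_inv (hmem t ht).2.2.2
    rwa [hcoe] at this
  have hQw : Q w = w := hQleft w hwK
  have hAG : ∀ x, A (G x) = Φ x - Q (Φ x) := by
    intro x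
    have h1 : Q (Φ x) = Q x := by
      simp only [hΦdef, hAc, hQc]
      rw [map_add, hQA]
      rw [zero_add]
      exact hQleft _ (hQmemK x)
    rw [h1]
    simp [hΦdef, hAc, hQc]
  have hAGθ₀ : A (G θ₀) = 0 := by rw [hG0]; exact map_zero A
  have hAGγ : ∀ t ∈ I, A (G (γ t)) = 0 := by
    intro t ht
    rw [hAG, hΦγ t ht]
    have : Q (a t) = Q (Φ θ₀) + t • w := by
      simp only [hadef]
      rw [map_add, LinearMap.map_smul, hQw]
    rw [hadef]
    show Φ θ₀ + t • w - Q (Φ θ₀ + t • w) = 0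
    rw [show Q (Φ θ₀ + t • w) = Q (Φ θ₀) + t • w from this]
    have h2 := hAG θ₀
    rw [hAGθ₀] at h2
    have h3 : Q (Φ θ₀) = Φ θ₀ := (sub_eq_zero.1 h2.symm).symm
    rw [h3]
    abel
  -- differentiability along the curve
  have hkeyderiv : ∀ t ∈ I, ∃ v : Fin p → ℝ,
      HasDerivAt γ v t ∧ (fderiv ℝ G (γ t)) v = 0 := by
    intro t ht
    obtain ⟨hV₀t, hsrc_t, _, htgt_t⟩ := hmem t ht
    obtain ⟨hΩt, hunit_t⟩ := hV₀t
    obtain ⟨u, hu⟩ := (hunit_t : IsUnit (DΦ (γ t)))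
    set Et := ContinuousLinearEquiv.unitsEquiv ℝ (Fin p → ℝ) u with hEtdef
    have hEt : (Et : (Fin p → ℝ) →L[ℝ] (Fin p → ℝ)) = DΦ (γ t) := by
      refine ContinuousLinearMap.ext fun v => ?_
      rw [← hu]
      rfl
    have hΦd : HasFDerivAt (⇑Φloc) ((Et : (Fin p → ℝ) →L[ℝ] (Fin p → ℝ)))
        (Φloc.symm (a t)) := by
      rw [hcoe, hEt]
      exact hΦfd (γ t) hΩt
    have hsymm := Φloc.hasFDerivAt_symm htgt_t hΦd
    have had : HasDerivAt a w t := by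
      have h1 : HasDerivAt (fun s : ℝ => s • w) ((1:ℝ) • w) t :=
        (hasDerivAt_id t).smul_const w
      simpa [hadef] using h1.const_add (Φ θ₀)
    have hγd : HasDerivAt γ (Et.symm w) t := hsymm.comp_hasDerivAt t had
    refine ⟨Et.symm w, hγd, ?_⟩
    have hgd : HasDerivAt (fun s => G (γ s)) ((fderiv ℝ G (γ t)) (Et.symm w)) t :=
      ((hGdiff _ hΩt).hasFDerivAt).comp_hasDerivAt t hγd
    have hAgd : HasDerivAt (fun s => Ac (G (γ s)))
        (Ac ((fderiv ℝ G (γ t)) (Et.symm w))) t :=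
      Ac.hasFDerivAt.comp_hasDerivAt t hgd
    have hconst : HasDerivAt (fun s => Ac (G (γ s))) 0 t := by
      have heq : (fun s => Ac (G (γ s))) =ᶠ[nhds t] (fun _ => (0 : Fin p → ℝ)) := by
        filter_upwards [Metric.isOpen_ball.mem_nhds ht] with s hs
        rw [hAc]
        exact hAGγ s hs
      exact (hasDerivAt_const t (0 : Fin p → ℝ)).congr_of_eventuallyEq heq
    have h0 : A ((fderiv ℝ G (γ t)) (Et.symm w)) = 0 := by
      rw [← hAc]
      exact hAgd.unique hconst
    exact hker (γ t) ⟨hΩt, ⟨u, hu⟩⟩ _ h0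
  -- constancy of G ∘ γ and of L ∘ γ on I
  have hconvex : Convex ℝ I := convex_ball 0 c
  have h0I : (0:ℝ) ∈ I := Metric.mem_ball_self hc0
  have hGγ0 : ∀ t ∈ I, G (γ t) = 0 := by
    intro t ht
    have hd : ∀ s ∈ I, HasDerivWithinAt (fun s => G (γ s)) (0 : Fin p → ℝ) I s := by
      intro s hs
      obtain ⟨v, hγd, hv0⟩ := hkeyderiv s hs
      have := ((hGdiff _ ((hmem s hs).1).1).hasFDerivAt).comp_hasDerivAt s hγd
      rw [hv0] at this
      exact this.hasDerivWithinAt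
    have hb := hconvex.norm_image_sub_le_of_norm_hasDerivWithin_le (C := 0) hd
      (fun s _ => by simp) h0I ht
    have : G (γ t) = G (γ 0) := by
      have h1 : ‖G (γ t) - G (γ 0)‖ ≤ 0 := by simpa using hb
      have h2 : G (γ t) - G (γ 0) = 0 := by
        have := norm_le_zero_iff.1 h1
        exact this
      exact sub_eq_zero.1 h2
    rw [this, hγ0, hG0]
  have hfder0 : ∀ t ∈ I, fderiv ℝ L (γ t) = 0 := by
    intro t ht
    apply aux_clm_zero
    intro j
    have := congrFun (hGγ0 t ht) j
    simpa [hGdef] using this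
  have hLconst : ∀ t ∈ I, L (γ t) = L θ₀ := by
    intro t ht
    have hd : ∀ s ∈ I, HasDerivWithinAt (fun s => L (γ s)) (0 : ℝ) I s := by
      intro s hs
      obtain ⟨v, hγd, hv0⟩ := hkeyderiv s hs
      have hΩs : γ s ∈ Ω := ((hmem s hs).1).1
      have hLdiff : DifferentiableAt ℝ L (γ s) :=
        (hL.contDiffAt (hΩ.mem_nhds hΩs)).differentiableAt (by norm_num)
      have hder := (hLdiff.hasFDerivAt).comp_hasDerivAt s hγd
      rw [hfder0 s hs] at hder
      have h' := hder.hasDerivWithinAt (s := I)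
      simp only [ContinuousLinearMap.zero_apply] at h'
      exact h'
    have hb := hconvex.norm_image_sub_le_of_norm_hasDerivWithin_le (C := 0) hd
      (fun s _ => by simp) h0I ht
    have h1 : ‖L (γ t) - L (γ 0)‖ ≤ 0 := by simpa using hb
    have h2 : L (γ t) = L (γ 0) := sub_eq_zero.1 (norm_le_zero_iff.1 h1)
    rw [h2, hγ0]
  -- conclusion
  have hcI : c / 2 ∈ I := by
    simp only [hIdef, Metric.mem_ball, Real.dist_eq, sub_zero]
    rw [abs_of_pos (by linarith)]
    linarith
  refine ⟨γ (c / 2), interior_subset (hmem _ hcI).2.2.1, ?_, hfder0 _ hcI, hLconst _ hcI⟩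
  intro heq
  have h1 : Φ (γ (c / 2)) = a (c / 2) := hΦγ _ hcI
  rw [heq] at h1
  have h2 : Φ θ₀ = Φ θ₀ + (c / 2) • w := by
    conv_lhs => rw [h1]
  have h3 : (c / 2 : ℝ) • w = 0 := by
    have := left_eq_add.1 h2
    exact this
  rcases smul_eq_zero.1 h3 with h | h
  · linarith
  · exact hw0 h
end

section
/- Let Ω ⊆ ℝ^p be open and let L : Ω → ℝ be twice continuously differentiable. Suppose there is an integer r < p such that the Hessian matrix (∂²L/∂θ_i∂θ_j(θ))_{i,j=1}^p has rank exactly r at every θ ∈ Ω. Then no local maximum of L in Ω is isolated: for every local maximum θ₀ ∈ Ω of L and every neighborhood U of θ₀, there exists δ ∈ U with δ ≠ θ₀ such that δ is also a local maximum of L and L(δ) = L(θ₀). -/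
open Metric MeasureTheory Set

/-- Theorem 1(iii), local-maximum assertion: if the Hessian of a C² function `L` has
constant rank `r < p` throughout the open set `Ω`, then no local maximum of `L` in `Ω`
is isolated: every neighborhood of a local maximum `θ₀` contains a different local
maximum `δ` with the same value `L δ = L θ₀`. -/
theorem stmt_4 {p r : ℕ} (hr : r < p) {Ω : Set (Fin p → ℝ)} (hΩ : IsOpen Ω)
    (L : (Fin p → ℝ) → ℝ) (hL : ContDiffOn ℝ 2 L Ω)
    (hH : ∀ θ ∈ Ω, (Matrix.of fun i j : Fin p =>
        fderiv ℝ (fun θ' => fderiv ℝ L θ' (Pi.single j 1)) θ (Pi.single i 1)).rank = r) :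
    ∀ θ₀ ∈ Ω, IsLocalMax L θ₀ →
      ∀ U ∈ nhds θ₀, ∃ δ ∈ U, δ ≠ θ₀ ∧ IsLocalMax L δ ∧ L δ = L θ₀ := by
  intro θ₀ hθ₀ hmax U hU
  by_contra hcon
  push_neg at hcon
  have hp : 0 < p := lt_of_le_of_lt (Nat.zero_le r) hr
  have : NeZero p := ⟨hp.ne'⟩
  -- open set where `L ≤ L θ₀`
  obtain ⟨s, hsub, hso, hθ₀s⟩ := _root_.eventually_nhds_iff.1 hmax
  have hsUΩ : s ∩ U ∩ Ω ∈ nhds θ₀ :=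
    Filter.inter_mem (Filter.inter_mem (hso.mem_nhds hθ₀s) hU) (hΩ.mem_nhds hθ₀)
  obtain ⟨ρ, hρpos, hball⟩ := Metric.nhds_basis_closedBall.mem_iff.1 hsUΩ
  set B : Set (Fin p → ℝ) := Metric.closedBall θ₀ ρ with hBdef
  have hBΩ : B ⊆ Ω := fun x hx => (hball hx).2
  have hBs : B ⊆ s := fun x hx => (hball hx).1.1
  have hBU : B ⊆ U := fun x hx => (hball hx).1.2
  have hθ₀B : θ₀ ∈ B := Metric.mem_closedBall_self hρpos.le
  -- strict maximum on the punctured ball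
  have hstrict : ∀ x ∈ B, x ≠ θ₀ → L x < L θ₀ := by
    intro x hx hne
    rcases lt_or_eq_of_le (hsub x (hBs hx)) with h | h
    · exact h
    · exfalso
      refine hcon x (hBU hx) hne ?_ h
      exact Filter.eventually_of_mem (hso.mem_nhds (hBs hx))
        (fun y hy => (hsub y hy).trans_eq h.symm)
  -- the gradient map
  set F : (Fin p → ℝ) → (Fin p → ℝ) := fun θ j => fderiv ℝ L θ (Pi.single j 1) with hFdef
  -- differentiability facts
  have hL1 : ∀ x ∈ Ω, DifferentiableAt ℝ L x := fun x hx =>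
    (hL.differentiableOn (by norm_num)).differentiableAt (hΩ.mem_nhds hx)
  have hD : ContDiffOn ℝ 1 (fun x => fderiv ℝ L x) Ω :=
    hL.fderiv_of_isOpen hΩ (by norm_num)
  have hDdiff : ∀ x ∈ Ω, DifferentiableAt ℝ (fun y => fderiv ℝ L y) x := fun x hx =>
    ((hD.differentiableOn one_ne_zero).differentiableAt (hΩ.mem_nhds hx))
  set π : ((Fin p → ℝ) →L[ℝ] ℝ) →L[ℝ] (Fin p → ℝ) :=
    ContinuousLinearMap.pi (fun j => ContinuousLinearMap.apply ℝ ℝ (Pi.single j 1)) with hπdef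
  -- derivative of `F`
  have hFd : ∀ x ∈ Ω,
      HasFDerivAt F (π.comp (fderiv ℝ (fun y => fderiv ℝ L y) x)) x := by
    intro x hx
    have h1 : HasFDerivAt (fun y => fderiv ℝ L y) (fderiv ℝ (fun y => fderiv ℝ L y) x) x :=
      (hDdiff x hx).hasFDerivAt
    have h2 := (π.hasFDerivAt.comp x h1)
    exact h2
  -- the determinant of the derivative vanishes
  have hdet : ∀ x ∈ B, (π.comp (fderiv ℝ (fun y => fderiv ℝ L y) x)).det = 0 := by
    intro x hx
    set A := π.comp (fderiv ℝ (fun y => fderiv ℝ L y) x) with hAdef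
    set M : Matrix (Fin p) (Fin p) ℝ := Matrix.of fun i j : Fin p =>
        fderiv ℝ (fun θ' => fderiv ℝ L θ' (Pi.single j 1)) x (Pi.single i 1) with hMdef
    have hMA : LinearMap.toMatrix' (A : (Fin p → ℝ) →ₗ[ℝ] (Fin p → ℝ)) = M.transpose := by
      ext j i
      rw [LinearMap.toMatrix'_apply]
      have hsingle : (fun j' => if j' = i then (1:ℝ) else 0) = Pi.single i 1 := by
        ext k; simp [Pi.single_apply]
      have : fderiv ℝ (fun θ' => fderiv ℝ L θ' (Pi.single j 1)) x
          = (ContinuousLinearMap.apply ℝ ℝ (Pi.single j 1)).comp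
              (fderiv ℝ (fun y => fderiv ℝ L y) x) := by
        have := (ContinuousLinearMap.apply ℝ ℝ (Pi.single j 1)).hasFDerivAt.comp x
          ((hDdiff x (hBΩ hx)).hasFDerivAt)
        exact this.fderiv
      simp only [Matrix.transpose_apply, hMdef, Matrix.of_apply, this]
      rfl
    have hdetA : A.det = M.det := by
      rw [ContinuousLinearMap.det, ← LinearMap.det_toMatrix', hMA, Matrix.det_transpose]
    rw [hdetA]
    by_contra hd
    have hu : IsUnit M := (Matrix.isUnit_iff_isUnit_det M).2 (isUnit_iff_ne_zero.2 hd)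
    have := Matrix.rank_of_isUnit M hu
    rw [hH x (hBΩ hx)] at this
    simp [Fintype.card_fin] at this
    omega
  -- image of `B` under `F` is null
  have hnull : volume (F '' B) = 0 := by
    refine addHaar_image_eq_zero_of_det_fderivWithin_eq_zero volume
      (f' := fun x => π.comp (fderiv ℝ (fun y => fderiv ℝ L y) x))
      (fun x hx => (hFd x (hBΩ hx)).hasFDerivWithinAt) hdet
  -- maximum of `L` on the sphere
  have hsne : (sphere θ₀ ρ).Nonempty := NormedSpace.sphere_nonempty.2 hρpos.le
  have hsphB : sphere θ₀ ρ ⊆ B := sphere_subset_closedBall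
  obtain ⟨xs, hxs, hxsmax⟩ := (isCompact_sphere θ₀ ρ).exists_isMaxOn hsne
    ((hL.continuousOn.mono (hsphB.trans hBΩ)))
  set m := L xs with hmdef
  have hxsne : xs ≠ θ₀ := by
    intro h
    rw [mem_sphere, h, dist_self] at hxs
    exact hρpos.ne' hxs.symm
  have hm : m < L θ₀ := hstrict xs (hsphB hxs) hxsne
  set c := L θ₀ - m with hcdef
  have hcpos : 0 < c := by simp [hcdef]; linarith
  set ε := c / (2 * p * ρ) with hεdef
  have hεpos : 0 < ε := by positivity
  -- local surjectivity of the gradient map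
  have hsurj : ball (0 : Fin p → ℝ) ε ⊆ F '' B := by
    intro w hw
    rw [mem_ball, dist_zero_right] at hw
    set φ : (Fin p → ℝ) →L[ℝ] ℝ := ∑ j, w j • ContinuousLinearMap.proj j with hφdef
    have hφ_apply : ∀ v, φ v = ∑ j, w j * v j := by
      intro v; simp [hφdef]
    have hφ_bound : ∀ v : Fin p → ℝ, |φ v| ≤ p * ‖w‖ * ‖v‖ := by
      intro v
      rw [hφ_apply]
      calc |∑ j, w j * v j| ≤ ∑ j, |w j * v j| := Finset.abs_sum_le_sum_abs _ _
        _ ≤ ∑ _j : Fin p, ‖w‖ * ‖v‖ := by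
            apply Finset.sum_le_sum
            intro j _
            rw [abs_mul]
            exact mul_le_mul (norm_le_pi_norm w j) (norm_le_pi_norm v j) (abs_nonneg _)
              (norm_nonneg _)
        _ = p * ‖w‖ * ‖v‖ := by simp [Finset.sum_const, mul_assoc]
    set g : (Fin p → ℝ) → ℝ := fun θ => L θ - φ θ with hgdef
    have hgc : ContinuousOn g B :=
      (hL.continuousOn.mono hBΩ).sub (φ.continuous.continuousOn)
    obtain ⟨xw, hxwB, hxwmax⟩ := (isCompact_closedBall θ₀ ρ).exists_isMaxOn ⟨θ₀, hθ₀B⟩ hgc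
    -- on the sphere, `g < g θ₀`
    have hsph_lt : ∀ y ∈ sphere θ₀ ρ, g y < g θ₀ := by
      intro y hy
      have hLy : L y ≤ m := hxsmax hy
      have hdist : ‖θ₀ - y‖ = ρ := by
        rw [← dist_eq_norm]
        rw [mem_sphere] at hy
        rw [dist_comm]; exact hy
      have hφe : |φ (θ₀ - y)| ≤ p * ‖w‖ * ρ := by
        have := hφ_bound (θ₀ - y)
        rwa [hdist] at this
      have hbound : p * ‖w‖ * ρ < c / 2 := by
        have h1 : p * ‖w‖ * ρ < p * ε * ρ := by
          apply mul_lt_mul_of_pos_right _ hρpos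
          exact mul_lt_mul_of_pos_left hw (by positivity)
        have h2 : (p : ℝ) * ε * ρ = c / 2 := by
          field_simp [hεdef]
          rw [hεdef]; field_simp [hp.ne', hρpos.ne']
        linarith
      have hφsub : φ θ₀ - φ y = φ (θ₀ - y) := by rw [map_sub]
      have : g y - g θ₀ = (L y - L θ₀) + (φ θ₀ - φ y) := by simp [hgdef]; ring
      have habs : φ θ₀ - φ y ≤ p * ‖w‖ * ρ := by
        rw [hφsub]; exact (le_abs_self _).trans hφe
      have : g y - g θ₀ < 0 := by
        rw [this]
        have : L y - L θ₀ ≤ m - L θ₀ := by linarith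
        have hcm : m - L θ₀ = -c := by rw [hcdef]; ring
        linarith
      linarith
    -- the max point is interior
    have hxw_int : xw ∈ ball θ₀ ρ := by
      rcases lt_or_eq_of_le (mem_closedBall.1 hxwB) with h | h
      · exact mem_ball.2 h
      · exfalso
        have hxs' : xw ∈ sphere θ₀ ρ := mem_sphere.2 h
        have h1 := hsph_lt xw hxs'
        have h2 := hxwmax hθ₀B
        simp only [Set.mem_setOf_eq] at h2
        linarith
    have hBnhds : B ∈ nhds xw :=
      Filter.mem_of_superset (isOpen_ball.mem_nhds hxw_int) ball_subset_closedBall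
    have hloc : IsLocalMax g xw := hxwmax.isLocalMax hBnhds
    have hfg : fderiv ℝ g xw = 0 := hloc.fderiv_eq_zero
    have hdL := hL1 xw (hBΩ hxwB)
    have hsub' : fderiv ℝ g xw = fderiv ℝ L xw - φ := by
      have : g = fun θ => L θ - φ θ := hgdef
      rw [this, fderiv_fun_sub hdL φ.differentiableAt, φ.fderiv]
    have hgrad : fderiv ℝ L xw = φ := by
      rw [hsub', sub_eq_zero] at hfg
      exact hfg
    refine ⟨xw, hxwB, ?_⟩
    funext j
    rw [hFdef]
    simp only [hgrad]
    rw [hφ_apply]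
    simp [Pi.single_apply, mul_comm]
  -- final contradiction
  have hpos : 0 < volume (ball (0 : Fin p → ℝ) ε) := measure_ball_pos _ _ hεpos
  have hle : volume (ball (0 : Fin p → ℝ) ε) ≤ 0 := hnull ▸ measure_mono hsurj
  exact absurd (le_antisymm hle zero_le) hpos.ne'
end

section
/- Let Ω ⊆ ℝ^k be open and let L : Ω → ℝ be twice continuously differentiable. Let r be the maximum over θ ∈ Ω of the rank of the Hessian matrix (∂²L/∂θ_i∂θ_j(θ))_{i,j=1}^k. Suppose L has a local maximum at a point θ* ∈ Ω at which the Hessian rank equals r, and suppose θ* is an isolated local maximum (there is a neighborhood of θ* in which θ* is the only local maximum of L). Then r = k. -/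
open Module Set

set_option maxHeartbeats 1000000 in
/-- Core of Theorem 2(i): let `r` be the maximal rank of the Hessian of a C² function
`L` over the open set `Ω ⊆ ℝ^k` (so the rank is everywhere `≤ r` and equals `r` at
`θ*`). If `L` has an isolated local maximum at `θ* ∈ Ω` where the Hessian rank is
maximal, then `r = k`. -/
theorem stmt_7 {k r : ℕ} {Ω : Set (Fin k → ℝ)} (hΩ : IsOpen Ω)
    (L : (Fin k → ℝ) → ℝ) (hL : ContDiffOn ℝ 2 L Ω)
    (hmax : ∀ θ ∈ Ω, (Matrix.of fun i j : Fin k =>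
        fderiv ℝ (fun θ' => fderiv ℝ L θ' (Pi.single j 1)) θ (Pi.single i 1)).rank ≤ r)
    (θs : Fin k → ℝ) (hθs : θs ∈ Ω)
    (hrank : (Matrix.of fun i j : Fin k =>
        fderiv ℝ (fun θ' => fderiv ℝ L θ' (Pi.single j 1)) θs (Pi.single i 1)).rank = r)
    (hlm : IsLocalMax L θs)
    (hiso : ∃ N ∈ nhds θs, ∀ δ ∈ N, IsLocalMax L δ → δ = θs) :
    r = k := by
  classical
  -- r ≤ k
  have hrk : r ≤ k := by
    rw [← hrank]
    exact (Matrix.rank_le_card_width _).trans (by simp)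
  rcases eq_or_lt_of_le hrk with h | hlt
  · exact h
  exfalso
  -- basic objects
  set f' : (Fin k → ℝ) → ((Fin k → ℝ) →L[ℝ] ℝ) := fderiv ℝ L with hf'def
  have hf'1 : ContDiffOn ℝ 1 f' Ω := hL.fderiv_of_isOpen (m := 1) hΩ (by norm_num)
  set evc : ((Fin k → ℝ) →L[ℝ] ℝ) →L[ℝ] (Fin k → ℝ) :=
    ContinuousLinearMap.pi (fun j => ContinuousLinearMap.apply ℝ ℝ (Pi.single j 1)) with hevc
  set g : (Fin k → ℝ) → (Fin k → ℝ) := fun θ => evc (f' θ) with hgdef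
  have hg1 : ContDiffOn ℝ 1 g Ω := evc.contDiff.comp_contDiffOn hf'1
  set A : (Fin k → ℝ) → ((Fin k → ℝ) →L[ℝ] (Fin k → ℝ)) := fun θ => fderiv ℝ g θ with hAdef
  have hAcont : ContinuousOn A Ω := hg1.continuousOn_fderiv_of_isOpen hΩ le_rfl
  have hgdiff : ∀ θ ∈ Ω, HasFDerivAt g (A θ) θ := by
    intro θ hθ
    exact ((hg1.differentiableOn one_ne_zero).differentiableAt (hΩ.mem_nhds hθ)).hasFDerivAt
  -- expansion of a CLM on the standard basis
  have hexp : ∀ (T : (Fin k → ℝ) →L[ℝ] (Fin k → ℝ)) (v : Fin k → ℝ) (j : Fin k),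
      T v j = ∑ i, v i * T (Pi.single i 1) j := by
    intro T v j
    have hv : v = ∑ i, Pi.single i (v i) := (Finset.univ_sum_single v).symm
    have : T v = ∑ i, v i • T (Pi.single i 1) := by
      conv_lhs => rw [hv]
      rw [map_sum]
      refine Finset.sum_congr rfl fun i _ => ?_
      have : Pi.single i (v i) = v i • (Pi.single i 1 : Fin k → ℝ) := by
        rw [← Pi.single_smul, smul_eq_mul, mul_one]
      rw [this, map_smul]
    rw [this]
    simp [Finset.sum_apply]
  have hexp1 : ∀ (T : (Fin k → ℝ) →L[ℝ] ℝ) (v : Fin k → ℝ),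
      T v = ∑ i, v i * T (Pi.single i 1) := by
    intro T v
    have hv : v = ∑ i, Pi.single i (v i) := (Finset.univ_sum_single v).symm
    conv_lhs => rw [hv]
    rw [map_sum]
    refine Finset.sum_congr rfl fun i _ => ?_
    have : Pi.single i (v i) = v i • (Pi.single i 1 : Fin k → ℝ) := by
      rw [← Pi.single_smul, smul_eq_mul, mul_one]
    rw [this, map_smul, smul_eq_mul]
  -- the matrix in the statement, in terms of A
  have hM : ∀ θ ∈ Ω, ∀ i j : Fin k,
      (Matrix.of fun i j : Fin k =>
        fderiv ℝ (fun θ' => fderiv ℝ L θ' (Pi.single j 1)) θ (Pi.single i 1)) i j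
        = A θ (Pi.single i 1) j := by
    intro θ hθ i j
    have h1 : HasFDerivAt (fun θ' => g θ' j) ((ContinuousLinearMap.proj j).comp (A θ)) θ :=
      (ContinuousLinearMap.proj (R := ℝ) (φ := fun _ : Fin k => ℝ) j).hasFDerivAt.comp θ
        (hgdiff θ hθ)
    have h2 : (fun θ' => fderiv ℝ L θ' (Pi.single j 1)) = fun θ' => g θ' j := rfl
    show fderiv ℝ (fun θ' => fderiv ℝ L θ' (Pi.single j 1)) θ (Pi.single i 1)
        = A θ (Pi.single i 1) j
    rw [h2, h1.fderiv]
    rfl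
  -- rank of the matrix equals rank of A θ
  have hrankA : ∀ θ ∈ Ω,
      (Matrix.of fun i j : Fin k =>
        fderiv ℝ (fun θ' => fderiv ℝ L θ' (Pi.single j 1)) θ (Pi.single i 1)).rank
        = finrank ℝ (LinearMap.range ((A θ) : (Fin k → ℝ) →ₗ[ℝ] (Fin k → ℝ))) := by
    intro θ hθ
    set M := Matrix.of fun i j : Fin k =>
        fderiv ℝ (fun θ' => fderiv ℝ L θ' (Pi.single j 1)) θ (Pi.single i 1) with hMdef
    have key : (M.transpose).mulVecLin = ((A θ) : (Fin k → ℝ) →ₗ[ℝ] (Fin k → ℝ)) := by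
      apply LinearMap.ext; intro v
      funext j
      rw [Matrix.mulVecLin_apply]
      show (M.transpose.mulVec v) j = A θ v j
      rw [hexp (A θ) v j]
      simp only [Matrix.mulVec, dotProduct, Matrix.transpose_apply]
      rw [hMdef]
      refine Finset.sum_congr rfl fun i _ => ?_
      rw [hM θ hθ i j, mul_comm]
    rw [← Matrix.rank_transpose, Matrix.rank, key]
  -- symmetry of the Hessian at θs
  have hsymm : ∀ i j : Fin k, A θs (Pi.single i 1) j = A θs (Pi.single j 1) i := by
    have hf'diff : DifferentiableAt ℝ f' θs :=
      (hf'1.differentiableOn one_ne_zero).differentiableAt (hΩ.mem_nhds hθs)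
    have hf'' : HasFDerivAt f' (fderiv ℝ f' θs) θs := hf'diff.hasFDerivAt
    have hev : ∀ᶠ y in nhds θs, HasFDerivAt L (f' y) y := by
      filter_upwards [hΩ.mem_nhds hθs] with y hy
      exact ((hL.differentiableOn (by norm_num)).differentiableAt (hΩ.mem_nhds hy)).hasFDerivAt
    have hsecond := second_derivative_symmetric_of_eventually hev hf''
    have hgd : HasFDerivAt g (evc.comp (fderiv ℝ f' θs)) θs := evc.hasFDerivAt.comp θs hf''
    have hAE : A θs = evc.comp (fderiv ℝ f' θs) := hgd.fderiv
    intro i j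
    rw [hAE]
    exact hsecond (Pi.single i 1) (Pi.single j 1)
  -- the bilinear identity: ∑ j, (A θs u) j * v j = ∑ j, (A θs v) j * u j
  have hbil : ∀ u v : Fin k → ℝ, (∑ j, A θs u j * v j) = ∑ j, A θs v j * u j := by
    intro u v
    have e1 : (∑ j, A θs u j * v j) = ∑ j, ∑ i, u i * A θs (Pi.single i 1) j * v j := by
      refine Finset.sum_congr rfl fun j _ => ?_
      rw [hexp (A θs) u j, Finset.sum_mul]
    have e2 : (∑ j, A θs v j * u j) = ∑ j, ∑ i, v i * A θs (Pi.single i 1) j * u j := by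
      refine Finset.sum_congr rfl fun j _ => ?_
      rw [hexp (A θs) v j, Finset.sum_mul]
    rw [e1, e2, Finset.sum_comm]
    refine Finset.sum_congr rfl fun j _ => ?_
    refine Finset.sum_congr rfl fun i _ => ?_
    rw [hsymm i j]
    ring
  -- kernel and range
  set Aℓ : (Fin k → ℝ) → ((Fin k → ℝ) →ₗ[ℝ] (Fin k → ℝ)) := fun θ => (A θ : (Fin k → ℝ) →ₗ[ℝ] (Fin k → ℝ)) with hAl
  set K : Submodule ℝ (Fin k → ℝ) := LinearMap.ker (Aℓ θs) with hK
  set W : Submodule ℝ (Fin k → ℝ) := LinearMap.range (Aℓ θs) with hW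
  have hfinW : finrank ℝ W = r := by
    have h1 := hrankA θs hθs
    rw [hrank] at h1
    rw [hW]
    exact h1.symm
  have hdisj : Disjoint K W := by
    rw [Submodule.disjoint_def]
    intro x hxK hxW
    obtain ⟨u, hu⟩ := hxW
    have hx0 : A θs x = 0 := hxK
    have h0 : (∑ j, x j * x j) = 0 := by
      have hb := hbil u x
      have hl : (∑ j, A θs u j * x j) = ∑ j, x j * x j := by
        refine Finset.sum_congr rfl fun j _ => ?_
        have : A θs u = x := hu
        rw [this]
      have hr : (∑ j, A θs x j * u j) = 0 := by
        refine Finset.sum_eq_zero fun j _ => ?_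
        rw [hx0]
        simp
      rw [hl, hr] at hb
      exact hb
    funext j
    have := (Finset.sum_eq_zero_iff_of_nonneg (fun i _ => mul_self_nonneg (x i))).1 h0 j
      (Finset.mem_univ j)
    exact mul_self_eq_zero.1 this
  have hfinK : finrank ℝ K + r = k := by
    have h1 := LinearMap.finrank_range_add_finrank_ker (Aℓ θs)
    rw [← hW, ← hK, hfinW] at h1
    rw [Nat.add_comm]
    rw [h1]
    simp [Module.finrank_pi]
  have hcompl : IsCompl K W := by
    refine ⟨hdisj, codisjoint_iff.2 ?_⟩
    apply Submodule.eq_top_of_finrank_eq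
    have h2 := Submodule.finrank_sup_add_finrank_inf_eq K W
    rw [hdisj.eq_bot, finrank_bot] at h2
    have : finrank ℝ (Fin k → ℝ) = k := by simp [Module.finrank_pi]
    rw [this]
    omega
  -- projections
  set pK : (Fin k → ℝ) →L[ℝ] (Fin k → ℝ) :=
    LinearMap.toContinuousLinearMap (K.subtype.comp (K.projectionOnto W hcompl)) with hpK
  set pW : (Fin k → ℝ) →L[ℝ] (Fin k → ℝ) :=
    LinearMap.toContinuousLinearMap (W.subtype.comp (W.projectionOnto K hcompl.symm)) with hpW
  have hpKmem : ∀ x, pK x ∈ K := fun x => (K.projectionOnto W hcompl x).2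
  have hpWmem : ∀ x, pW x ∈ W := fun x => (W.projectionOnto K hcompl.symm x).2
  have hpKK : ∀ x ∈ K, pK x = x := by
    intro x hx
    show (K.subtype.comp (K.projectionOnto W hcompl)) x = x
    simp only [LinearMap.comp_apply]
    rw [show x = ((⟨x, hx⟩ : K) : Fin k → ℝ) from rfl,
      Submodule.projectionOnto_apply_left hcompl]
    rfl
  have hpKW0 : ∀ x ∈ W, pK x = 0 := by
    intro x hx
    show (K.subtype.comp (K.projectionOnto W hcompl)) x = 0
    simp only [LinearMap.comp_apply]
    rw [Submodule.projectionOnto_apply_of_mem_right hcompl hx]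
    rfl
  have hpWW : ∀ x ∈ W, pW x = x := by
    intro x hx
    show (W.subtype.comp (W.projectionOnto K hcompl.symm)) x = x
    simp only [LinearMap.comp_apply]
    rw [show x = ((⟨x, hx⟩ : W) : Fin k → ℝ) from rfl,
      Submodule.projectionOnto_apply_left hcompl.symm]
    rfl
  have hpWK0 : ∀ x ∈ K, pW x = 0 := by
    intro x hx
    show (W.subtype.comp (W.projectionOnto K hcompl.symm)) x = 0
    simp only [LinearMap.comp_apply]
    rw [Submodule.projectionOnto_apply_of_mem_right hcompl.symm hx]
    rfl
  -- the auxiliary map Φ and its derivative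
  set Φ : (Fin k → ℝ) → (Fin k → ℝ) := fun θ => pW (g θ) + pK (θ - θs) with hΦdef
  set DΦ : (Fin k → ℝ) → ((Fin k → ℝ) →L[ℝ] (Fin k → ℝ)) :=
    fun θ => pW.comp (A θ) + pK with hDΦdef
  have hDΦapp : ∀ θ v, DΦ θ v = pW (A θ v) + pK v := fun _ _ => rfl
  have hΦderiv : ∀ θ ∈ Ω, HasFDerivAt Φ (DΦ θ) θ := by
    intro θ hθ
    have h1 : HasFDerivAt (fun θ' => pW (g θ')) (pW.comp (A θ)) θ :=
      pW.hasFDerivAt.comp θ (hgdiff θ hθ)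
    have h2 : HasFDerivAt (fun θ' : Fin k → ℝ => pK (θ' - θs)) pK θ := by
      have h3 : HasFDerivAt (fun θ' : Fin k → ℝ => θ' - θs)
          (ContinuousLinearMap.id ℝ (Fin k → ℝ)) θ := (hasFDerivAt_id θ).sub_const θs
      simpa using pK.hasFDerivAt.comp θ h3
    exact h1.add h2
  have hΦstrict : HasStrictFDerivAt Φ (DΦ θs) θs := by
    have hgC : ContDiffAt ℝ 1 g θs := hg1.contDiffAt (hΩ.mem_nhds hθs)
    have hΦC : ContDiffAt ℝ 1 Φ θs := by
      apply ContDiffAt.add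
      · exact (pW.contDiff.comp_contDiffAt θs hgC)
      · exact (pK.contDiff.comp (contDiff_id.sub contDiff_const)).contDiffAt
    have h := hΦC.hasStrictFDerivAt one_ne_zero
    rwa [(hΦderiv θs hθs).fderiv] at h
  -- bijectivity of DΦ θs
  have hker0 : ∀ v, DΦ θs v = 0 → v = 0 := by
    intro v hv
    rw [hDΦapp] at hv
    have hAv : A θs v ∈ W := ⟨v, rfl⟩
    have h1 : pW (A θs v) = A θs v := hpWW _ hAv
    rw [h1] at hv
    -- A θs v ∈ W, pK v ∈ K, sum is 0
    have h2 : A θs v = -(pK v) := eq_neg_of_add_eq_zero_left hv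
    have h3 : A θs v ∈ K := h2 ▸ (K.neg_mem (hpKmem v))
    have h4 : A θs v = 0 := (Submodule.disjoint_def.1 hdisj) _ h3 hAv
    have h5 : pK v = 0 := by rw [h4] at hv; simpa using hv
    have h6 : v ∈ K := h4
    have h7 := hpKK v h6
    rw [h5] at h7
    exact h7.symm
  have hinj : Function.Injective (DΦ θs) := by
    intro v w hvw
    have h0 : DΦ θs (v - w) = 0 := by rw [map_sub, hvw, sub_self]
    have := hker0 _ h0
    exact sub_eq_zero.1 this
  have hbij : Function.Bijective ((DΦ θs : (Fin k → ℝ) →ₗ[ℝ] (Fin k → ℝ))) :=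
    ⟨hinj, (LinearMap.injective_iff_surjective).1 hinj⟩
  set eΦ : (Fin k → ℝ) ≃L[ℝ] (Fin k → ℝ) :=
    (LinearEquiv.ofBijective _ hbij).toContinuousLinearEquiv with heΦ
  have heΦcoe : (eΦ : (Fin k → ℝ) →L[ℝ] (Fin k → ℝ)) = DΦ θs := by
    apply ContinuousLinearMap.ext
    intro v
    rfl
  have hunit_s : IsUnit (DΦ θs) := by
    refine ⟨⟨DΦ θs, (eΦ.symm : (Fin k → ℝ) →L[ℝ] (Fin k → ℝ)), ?_, ?_⟩, rfl⟩
    · apply ContinuousLinearMap.ext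
      intro v
      show DΦ θs (eΦ.symm v) = v
      rw [← heΦcoe]
      exact eΦ.apply_symm_apply v
    · apply ContinuousLinearMap.ext
      intro v
      show eΦ.symm (DΦ θs v) = v
      rw [← heΦcoe]
      exact eΦ.symm_apply_apply v
  -- DΦ is continuous on Ω, so invertibility holds on an open neighborhood V of θs
  have hDcont : ContinuousOn DΦ Ω := by
    apply ContinuousOn.add
    · exact ((ContinuousLinearMap.compL ℝ (Fin k → ℝ) (Fin k → ℝ) (Fin k → ℝ) pW).continuous).comp_continuousOn hAcont
    · exact continuousOn_const
  set V : Set (Fin k → ℝ) := Ω ∩ DΦ ⁻¹' {x | IsUnit x} with hV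
  have hVopen : IsOpen V := hDcont.isOpen_inter_preimage hΩ Units.isOpen
  have hθsV : θs ∈ V := ⟨hθs, hunit_s⟩
  have hVΩ : V ⊆ Ω := fun _ h => h.1
  -- on V, kernels of pW ∘ A θ and of A θ agree
  have hker : ∀ θ ∈ V, ∀ v, pW (A θ v) = 0 → A θ v = 0 := by
    intro θ hθV v hv
    have hθΩ : θ ∈ Ω := hθV.1
    have hsurj : Function.Surjective (DΦ θ) := by
      obtain ⟨u, hu⟩ := hθV.2
      intro y
      refine ⟨u.inv y, ?_⟩
      calc DΦ θ (u.inv y) = (u.val * u.inv) y := by rw [hu]; rfl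
        _ = y := by rw [u.val_inv]; rfl
    set T : (Fin k → ℝ) →ₗ[ℝ] (Fin k → ℝ) := ((pW.comp (A θ)) : (Fin k → ℝ) →ₗ[ℝ] (Fin k → ℝ)) with hT
    have hrangeT : LinearMap.range T = W := by
      apply le_antisymm
      · rintro x ⟨w, rfl⟩
        exact hpWmem _
      · intro w hw
        obtain ⟨v', hv'⟩ := hsurj w
        rw [hDΦapp] at hv'
        have h1 : pK (pW (A θ v') + pK v') = pK w := by rw [hv']
        rw [map_add, hpKW0 _ (hpWmem _), hpKK _ (hpKmem _), hpKW0 _ hw, zero_add] at h1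
        refine ⟨v', ?_⟩
        show pW (A θ v') = w
        rw [h1, add_zero] at hv'
        exact hv'
    have hfinT : finrank ℝ (LinearMap.range T) = r := by rw [hrangeT]; exact hfinW
    have hrn1 := LinearMap.finrank_range_add_finrank_ker T
    have hrn2 := LinearMap.finrank_range_add_finrank_ker (Aℓ θ)
    have hfinE : finrank ℝ (Fin k → ℝ) = k := by simp [Module.finrank_pi]
    rw [hfinE] at hrn1 hrn2
    rw [hfinT] at hrn1
    have hrA : finrank ℝ (LinearMap.range (Aℓ θ)) ≤ r := by
      rw [← hrankA θ hθΩ]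
      exact hmax θ hθΩ
    have hle : LinearMap.ker (Aℓ θ) ≤ LinearMap.ker T := by
      intro x hx
      have hx0 : A θ x = 0 := hx
      show pW (A θ x) = 0
      rw [hx0, map_zero]
    have heq : LinearMap.ker (Aℓ θ) = LinearMap.ker T :=
      Submodule.eq_of_le_of_finrank_le hle (by omega)
    have hvT : v ∈ LinearMap.ker T := hv
    rw [← heq] at hvT
    exact hvT
  -- equivalences from units
  have hequiv : ∀ θ, IsUnit (DΦ θ) →
      ∃ e : (Fin k → ℝ) ≃L[ℝ] (Fin k → ℝ), (e : (Fin k → ℝ) →L[ℝ] (Fin k → ℝ)) = DΦ θ := by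
    intro θ hu'
    obtain ⟨u, hu⟩ := hu'
    have hinj' : Function.Injective (DΦ θ) := by
      intro v w hvw
      have h1 : u.inv (u.val v) = u.inv (u.val w) := by rw [hu]; rw [hvw]
      have h2 : ∀ z, u.inv (u.val z) = z := by
        intro z
        show (u.inv * u.val) z = z
        rw [u.inv_val]
        rfl
      rw [h2, h2] at h1
      exact h1
    have hbij' : Function.Bijective ((DΦ θ : (Fin k → ℝ) →ₗ[ℝ] (Fin k → ℝ))) :=
      ⟨hinj', (LinearMap.injective_iff_surjective).1 hinj'⟩
    exact ⟨(LinearEquiv.ofBijective _ hbij').toContinuousLinearEquiv,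
      ContinuousLinearMap.ext fun v => rfl⟩
  -- the gradient vanishes at θs
  have hg0 : g θs = 0 := by
    have h1 : f' θs = 0 := hlm.fderiv_eq_zero
    show evc (f' θs) = 0
    rw [h1, map_zero]
  have hΦθs : Φ θs = 0 := by
    show pW (g θs) + pK (θs - θs) = 0
    rw [hg0, map_zero, sub_self, map_zero, add_zero]
  -- the local homeomorphism
  have hΦstrict' : HasStrictFDerivAt Φ
      ((eΦ : (Fin k → ℝ) →L[ℝ] (Fin k → ℝ))) θs := by rw [heΦcoe]; exact hΦstrict
  set F := hΦstrict'.toOpenPartialHomeomorph Φ with hFdef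
  have hFcoe : ⇑F = Φ := rfl
  have hsrc : θs ∈ F.source := hΦstrict'.mem_toOpenPartialHomeomorph_source
  have htgt0 : (0 : Fin k → ℝ) ∈ F.target := by
    have h1 := F.map_source hsrc
    rw [hFcoe, hΦθs] at h1
    exact h1
  have hγ0 : F.symm 0 = θs := by
    have h1 := F.left_inv hsrc
    rw [hFcoe, hΦθs] at h1
    exact h1
  -- a nonzero direction in K
  have hKne : K ≠ ⊥ := by
    intro hbot
    rw [hbot, finrank_bot] at hfinK
    omega
  obtain ⟨u₀, hu₀K, hu₀ne⟩ := (Submodule.ne_bot_iff K).1 hKne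
  -- neighborhoods
  obtain ⟨O, hOsub, hOopen, hθsO⟩ := mem_nhds_iff.1 hlm
  obtain ⟨N, hN, hNmax⟩ := hiso
  set S : Set (Fin k → ℝ) := V ∩ O ∩ interior N ∩ F.source with hS
  have hSnhds : S ∈ nhds θs := by
    refine Filter.inter_mem (Filter.inter_mem (Filter.inter_mem ?_ ?_) ?_) ?_
    · exact hVopen.mem_nhds hθsV
    · exact hOopen.mem_nhds hθsO
    · exact isOpen_interior.mem_nhds (mem_interior_iff_mem_nhds.2 hN)
    · exact F.open_source.mem_nhds hsrc
  -- the curve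
  set c : ℝ → (Fin k → ℝ) := fun t => t • u₀ with hc
  have hc0 : c 0 = 0 := zero_smul ℝ u₀
  have hccont : Continuous c := continuous_id.smul continuous_const
  set γ : ℝ → (Fin k → ℝ) := fun t => F.symm (c t) with hγ
  have hγ00 : γ 0 = θs := by rw [hγ]; show F.symm (c 0) = θs; rw [hc0, hγ0]
  have hγcont0 : ContinuousAt γ 0 := by
    apply ContinuousAt.comp
    · rw [hc0]
      exact F.symm.continuousAt (by rw [F.symm_source]; exact htgt0)
    · exact hccont.continuousAt
  have hmem : {t : ℝ | c t ∈ F.target ∧ γ t ∈ S} ∈ nhds (0 : ℝ) := by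
    have h1 : ∀ᶠ t in nhds (0:ℝ), c t ∈ F.target := by
      have := hccont.continuousAt (x := (0:ℝ))
      apply this.preimage_mem_nhds
      rw [hc0]
      exact F.open_target.mem_nhds htgt0
    have h2 : ∀ᶠ t in nhds (0:ℝ), γ t ∈ S := by
      apply hγcont0.preimage_mem_nhds
      rw [hγ00]
      exact hSnhds
    exact h1.and h2
  obtain ⟨ε, hε, hball⟩ := Metric.mem_nhds_iff.1 hmem
  set I : Set ℝ := Metric.ball (0:ℝ) ε with hI
  have h0I : (0:ℝ) ∈ I := Metric.mem_ball_self hε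
  have hctgt : ∀ t ∈ I, c t ∈ F.target := fun t ht => (hball ht).1
  have hγS : ∀ t ∈ I, γ t ∈ S := fun t ht => (hball ht).2
  have hγV : ∀ t ∈ I, γ t ∈ V := fun t ht => (hγS t ht).1.1.1
  have hγΩ : ∀ t ∈ I, γ t ∈ Ω := fun t ht => hVΩ (hγV t ht)
  have hΦγ : ∀ t ∈ I, Φ (γ t) = c t := by
    intro t ht
    have h := F.right_inv (hctgt t ht)
    rw [hFcoe] at h
    exact h
  have hpWg : ∀ t ∈ I, pW (g (γ t)) = 0 := by
    intro t ht
    have h1 := congrArg pW (hΦγ t ht)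
    have h2 : Φ (γ t) = pW (g (γ t)) + pK (γ t - θs) := rfl
    rw [h2, map_add, hpWW _ (hpWmem _), hpWK0 _ (hpKmem _), add_zero] at h1
    rw [h1]
    show pW (t • u₀) = 0
    rw [map_smul, hpWK0 u₀ hu₀K, smul_zero]
  -- derivative of the curve
  have hγderiv : ∀ t ∈ I, ∃ d : Fin k → ℝ, HasDerivAt γ d t ∧ DΦ (γ t) d = u₀ := by
    intro t ht
    obtain ⟨e, he⟩ := hequiv (γ t) (hγV t ht).2
    have hΦd : HasFDerivAt Φ ((e : (Fin k → ℝ) →L[ℝ] (Fin k → ℝ))) (F.symm (c t)) := by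
      rw [he]
      exact hΦderiv (γ t) (hγΩ t ht)
    have hsymmcont : ContinuousAt F.symm (c t) :=
      F.symm.continuousAt (by rw [F.symm_source]; exact hctgt t ht)
    have hfg : ∀ᶠ y in nhds (c t), Φ (F.symm y) = y := by
      filter_upwards [F.open_target.mem_nhds (hctgt t ht)] with y hy
      have := F.right_inv hy
      rwa [hFcoe] at this
    have hFsymm : HasFDerivAt F.symm
        ((e.symm : (Fin k → ℝ) →L[ℝ] (Fin k → ℝ))) (c t) :=
      hΦd.of_local_left_inverse hsymmcont hfg
    have hcd : HasDerivAt c u₀ t := by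
      have := (hasDerivAt_id t).smul_const u₀
      simpa using this
    have hγd : HasDerivAt γ (e.symm u₀) t := hFsymm.comp_hasDerivAt t hcd
    refine ⟨e.symm u₀, hγd, ?_⟩
    rw [← he]
    exact e.apply_symm_apply u₀
  -- g ∘ γ has zero derivative on I
  have hgγderiv : ∀ t ∈ I, HasDerivAt (fun s => g (γ s)) 0 t := by
    intro t ht
    obtain ⟨d, hd, hDd⟩ := hγderiv t ht
    have hhd : HasDerivAt (fun s => g (γ s)) (A (γ t) d) t :=
      (hgdiff _ (hγΩ t ht)).comp_hasDerivAt t hd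
    have hq : HasDerivAt (fun s => pW (g (γ s))) (pW (A (γ t) d)) t :=
      pW.hasFDerivAt.comp_hasDerivAt t hhd
    have hq0 : HasDerivAt (fun s => pW (g (γ s))) 0 t := by
      have hev : (fun s => pW (g (γ s))) =ᶠ[nhds t] fun _ => (0 : Fin k → ℝ) := by
        filter_upwards [Metric.isOpen_ball.mem_nhds ht] with s hs
        exact hpWg s hs
      exact (hasDerivAt_const t (0 : Fin k → ℝ)).congr_of_eventuallyEq hev
    have huniq : pW (A (γ t) d) = 0 := hq.unique hq0
    have hA0 : A (γ t) d = 0 := hker (γ t) (hγV t ht) d huniq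
    rw [hA0] at hhd
    exact hhd
  -- conclusion on the interval [0, ε/2]
  set t₀ : ℝ := ε / 2 with ht₀
  have ht₀pos : 0 < t₀ := by positivity
  have hIccI : Icc (0:ℝ) t₀ ⊆ I := by
    intro x hx
    rw [hI, Metric.mem_ball, Real.dist_eq, sub_zero, abs_of_nonneg hx.1]
    have h2 := hx.2
    rw [ht₀] at h2
    exact lt_of_le_of_lt h2 (half_lt_self hε)
  have ht₀I : t₀ ∈ I := hIccI ⟨le_of_lt ht₀pos, le_refl t₀⟩
  have hgγcont : ContinuousOn (fun s => g (γ s)) (Icc (0:ℝ) t₀) := by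
    intro x hx
    exact ((hgγderiv x (hIccI hx)).continuousAt).continuousWithinAt
  have hgconst : ∀ x ∈ Icc (0:ℝ) t₀, g (γ x) = g (γ 0) := by
    apply constant_of_has_deriv_right_zero hgγcont
    intro x hx
    exact ((hgγderiv x (hIccI (Ico_subset_Icc_self hx))).hasDerivWithinAt)
  have hgzero : ∀ x ∈ Icc (0:ℝ) t₀, g (γ x) = 0 := by
    intro x hx
    rw [hgconst x hx, hγ00, hg0]
  -- L ∘ γ has zero derivative on the interval
  have hf'zero : ∀ x ∈ Icc (0:ℝ) t₀, f' (γ x) = 0 := by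
    intro x hx
    apply ContinuousLinearMap.ext
    intro v
    rw [hexp1 (f' (γ x)) v]
    rw [ContinuousLinearMap.zero_apply]
    apply Finset.sum_eq_zero
    intro i _
    have : f' (γ x) (Pi.single i 1) = g (γ x) i := rfl
    rw [this, hgzero x hx]
    simp
  have hLγderiv : ∀ x ∈ Icc (0:ℝ) t₀, HasDerivAt (fun s => L (γ s)) 0 x := by
    intro x hx
    obtain ⟨d, hd, _⟩ := hγderiv x (hIccI hx)
    have hLd : HasFDerivAt L (f' (γ x)) (γ x) :=
      ((hL.differentiableOn (by norm_num)).differentiableAt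
        (hΩ.mem_nhds (hγΩ x (hIccI hx)))).hasFDerivAt
    have := hLd.comp_hasDerivAt x hd
    rwa [hf'zero x hx, ContinuousLinearMap.zero_apply] at this
  have hLγcont : ContinuousOn (fun s => L (γ s)) (Icc (0:ℝ) t₀) := by
    intro x hx
    exact ((hLγderiv x hx).continuousAt).continuousWithinAt
  have hLconst : L (γ t₀) = L θs := by
    have := constant_of_has_deriv_right_zero hLγcont
      (fun x hx => (hLγderiv x (Ico_subset_Icc_self hx)).hasDerivWithinAt) t₀
      ⟨le_of_lt ht₀pos, le_refl t₀⟩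
    rw [this, hγ00]
  -- γ t₀ is a local maximum distinct from θs : contradiction
  have hδS : γ t₀ ∈ S := hγS t₀ ht₀I
  have hδmax : IsLocalMax L (γ t₀) := by
    have hOnhds : O ∈ nhds (γ t₀) := hOopen.mem_nhds hδS.1.1.2
    filter_upwards [hOnhds] with z hz
    rw [hLconst]
    exact hOsub hz
  have hδN : γ t₀ ∈ N := interior_subset hδS.1.2
  have hδeq : γ t₀ = θs := hNmax _ hδN hδmax
  have hΦδ : Φ (γ t₀) = c t₀ := hΦγ t₀ ht₀I
  rw [hδeq, hΦθs] at hΦδ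
  have : t₀ • u₀ ≠ 0 := smul_ne_zero (ne_of_gt ht₀pos) hu₀ne
  exact this hΦδ.symm
end

section
/- Let Ω ⊆ ℝ^p be open, let θ₀ ∈ Ω, let L : Ω → ℝ be twice continuously differentiable, and let S ⊆ {1, …, p} with |S| = k. Suppose the k×k principal submatrix (∂²L/∂θ_i∂θ_j(θ₀))_{i,j∈S} of the Hessian of L at θ₀ is invertible. Then the restricted function of k variables, obtained from L by letting the coordinates in S vary and fixing the coordinates outside S at their values in θ₀, has an open neighborhood (in ℝ^k) of (θ₀)_S containing at most one turning point and at most one local maximum. (Thus the subset of parameters indexed by S is gradient weakly locally identifiable at θ₀.) -/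
/-- Local injectivity from an invertible strict derivative (inverse function theorem). -/
private lemma stmt13_inj {E : Type*} [NormedAddCommGroup E] [NormedSpace ℝ E] [CompleteSpace E]
    {g : E → E} {y₀ : E} {e : E ≃L[ℝ] E} (hg : HasStrictFDerivAt g (e : E →L[ℝ] E) y₀) :
    ∃ N : Set E, IsOpen N ∧ y₀ ∈ N ∧ ∀ y₁ ∈ N, ∀ y₂ ∈ N, g y₁ = g y₂ → y₁ = y₂ := by
  refine ⟨(hg.toOpenPartialHomeomorph g).source, (hg.toOpenPartialHomeomorph g).open_source,
    hg.mem_toOpenPartialHomeomorph_source, fun y₁ h₁ y₂ h₂ hgy => ?_⟩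
  have h := (hg.toOpenPartialHomeomorph g).injOn
  rw [hg.toOpenPartialHomeomorph_coe] at h
  exact h h₁ h₂ hgy

/-- Corollary 2(i): if the `k × k` principal submatrix of the Hessian of a C² function
`L` at `θ₀ ∈ Ω` indexed by a subset `S` of `k` coordinates is invertible, then the
restriction of `L` to the coordinates in `S` (the remaining coordinates fixed at their
values in `θ₀`) has an open neighborhood of the `S`-coordinates of `θ₀` containing at
most one turning point and at most one local maximum; i.e. the parameter subset indexed
by `S` is gradient weakly locally identifiable at `θ₀`. -/
theorem stmt_13 {p k : ℕ} {Ω : Set (Fin p → ℝ)} (hΩ : IsOpen Ω)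
    (L : (Fin p → ℝ) → ℝ) (hL : ContDiffOn ℝ 2 L Ω)
    (θ₀ : Fin p → ℝ) (hθ₀ : θ₀ ∈ Ω)
    (S : Finset (Fin p)) (hS : S.card = k)
    (hsub : IsUnit (Matrix.of fun i j : {i // i ∈ S} =>
        fderiv ℝ (fun θ => fderiv ℝ L θ (Pi.single j.1 1)) θ₀ (Pi.single i.1 1)).det) :
    ∃ N' : Set ({i // i ∈ S} → ℝ), IsOpen N' ∧
      (fun i : {i // i ∈ S} => θ₀ i.1) ∈ N' ∧
      (∀ y₁ ∈ N', ∀ y₂ ∈ N',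
        fderiv ℝ (fun y : {i // i ∈ S} → ℝ =>
          L fun i => if h : i ∈ S then y ⟨i, h⟩ else θ₀ i) y₁ = 0 →
        fderiv ℝ (fun y : {i // i ∈ S} → ℝ =>
          L fun i => if h : i ∈ S then y ⟨i, h⟩ else θ₀ i) y₂ = 0 →
        y₁ = y₂) ∧
      (∀ y₁ ∈ N', ∀ y₂ ∈ N',
        IsLocalMax (fun y : {i // i ∈ S} → ℝ =>
          L fun i => if h : i ∈ S then y ⟨i, h⟩ else θ₀ i) y₁ →
        IsLocalMax (fun y : {i // i ∈ S} → ℝ =>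
          L fun i => if h : i ∈ S then y ⟨i, h⟩ else θ₀ i) y₂ →
        y₁ = y₂) := by
  classical
  -- the linear injection of the S-coordinates into ℝ^p
  let A : ({i // i ∈ S} → ℝ) →L[ℝ] (Fin p → ℝ) :=
    ContinuousLinearMap.pi fun i : Fin p =>
      if h : i ∈ S then ContinuousLinearMap.proj ⟨i, h⟩ else 0
  have hA : ∀ (y : {i // i ∈ S} → ℝ) (i : Fin p),
      A y i = if h : i ∈ S then y ⟨i, h⟩ else 0 := by
    intro y i
    rw [ContinuousLinearMap.pi_apply]
    split <;> rfl
  let y₀ : {i // i ∈ S} → ℝ := fun i => θ₀ i.1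
  let c : Fin p → ℝ := θ₀ - A y₀
  let φ : ({i // i ∈ S} → ℝ) → (Fin p → ℝ) := fun y => A y + c
  have hφ : ∀ y : {i // i ∈ S} → ℝ,
      (fun i => if h : i ∈ S then y ⟨i, h⟩ else θ₀ i) = φ y := by
    intro y; funext i
    simp only [φ, c, Pi.add_apply, Pi.sub_apply, hA]
    split
    · simp [y₀]
    · simp
  have hφ0 : φ y₀ = θ₀ := by
    funext i; simp [φ, c]
  have hAe : ∀ j : {i // i ∈ S}, A (Pi.single j 1) = Pi.single j.1 (1 : ℝ) := by
    intro j; funext i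
    rw [hA]
    rcases eq_or_ne i j.1 with rfl | hne
    · have h : (j : Fin p) ∈ S := j.2
      rw [dif_pos h]
      have hj : (⟨j.1, h⟩ : {i // i ∈ S}) = j := Subtype.ext rfl
      rw [hj, Pi.single_eq_same, Pi.single_eq_same]
    · rw [Pi.single_eq_of_ne hne]
      split
      · next h =>
          exact Pi.single_eq_of_ne (fun hc => hne (congrArg Subtype.val hc)) 1
      · rfl
  have hφdiff : ∀ y, HasFDerivAt φ A y := fun y => A.hasFDerivAt.add_const c
  have hφcont : Continuous φ := A.continuous.add continuous_const
  have hL2 : ContDiffAt ℝ 2 L θ₀ := hL.contDiffAt (hΩ.mem_nhds hθ₀)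
  have hG1 : ContDiffAt ℝ 1 (fderiv ℝ L) θ₀ := hL2.fderiv_right (by norm_num)
  set H := fderiv ℝ (fderiv ℝ L) θ₀ with hHdef
  have hH : HasFDerivAt (fderiv ℝ L) H θ₀ :=
    (hG1.differentiableAt one_ne_zero).hasFDerivAt
  let P : ((Fin p → ℝ) →L[ℝ] ℝ) →L[ℝ] (({i // i ∈ S} → ℝ) →L[ℝ] ℝ) :=
    (ContinuousLinearMap.compL ℝ ({i // i ∈ S} → ℝ) (Fin p → ℝ) ℝ).flip A
  have hP : ∀ ℓ, P ℓ = ℓ.comp A := fun ℓ => rfl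
  let Φ : (({i // i ∈ S} → ℝ) →L[ℝ] ℝ) →L[ℝ] ({i // i ∈ S} → ℝ) :=
    ContinuousLinearMap.pi fun j => ContinuousLinearMap.apply ℝ ℝ (Pi.single j 1)
  let G : ({i // i ∈ S} → ℝ) → ({i // i ∈ S} → ℝ) :=
    fun y => Φ (P (fderiv ℝ L (φ y)))
  have hG1' : ContDiffAt ℝ 1 (fderiv ℝ L) (φ y₀) := by rw [hφ0]; exact hG1
  have hGc : ContDiffAt ℝ 1 G y₀ :=
    ((Φ.comp P).contDiff.contDiffAt).comp y₀
      (hG1'.comp y₀ ((A.contDiff.add contDiff_const).contDiffAt))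
  let D : ({i // i ∈ S} → ℝ) →L[ℝ] ({i // i ∈ S} → ℝ) := (Φ.comp P).comp (H.comp A)
  have hH' : HasFDerivAt (fderiv ℝ L) H (φ y₀) := by rw [hφ0]; exact hH
  have hGd : HasFDerivAt G D y₀ :=
    ((Φ.comp P).hasFDerivAt).comp y₀ (hH'.comp y₀ (hφdiff y₀))
  have hGs : HasStrictFDerivAt G D y₀ := by
    have h := hGc.hasStrictFDerivAt one_ne_zero
    rwa [hGd.fderiv] at h
  -- identify D with the (transposed) Hessian submatrix
  set M : Matrix {i // i ∈ S} {i // i ∈ S} ℝ := Matrix.of fun i j =>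
      fderiv ℝ (fun θ => fderiv ℝ L θ (Pi.single j.1 1)) θ₀ (Pi.single i.1 1) with hMdef
  have hM : ∀ i j : {i // i ∈ S}, M i j = H (Pi.single i.1 1) (Pi.single j.1 1) := by
    intro i j
    have happ := hH.clm_apply (hasFDerivAt_const (Pi.single j.1 (1 : ℝ)) θ₀)
    show fderiv ℝ (fun θ => fderiv ℝ L θ (Pi.single j.1 1)) θ₀ (Pi.single i.1 1) = _
    rw [happ.fderiv]
    simp
  have hDe : ∀ i j : {i // i ∈ S}, D (Pi.single i 1) j = M i j := by
    intro i j
    show H (A (Pi.single i 1)) (A (Pi.single j 1)) = M i j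
    rw [hAe, hAe, hM]
  have hMdet : IsUnit M.det := hsub
  have hMT : Invertible M.transpose :=
    M.transpose.invertibleOfIsUnitDet (by rw [Matrix.det_transpose]; exact hMdet)
  let cle : ({i // i ∈ S} → ℝ) ≃L[ℝ] ({i // i ∈ S} → ℝ) :=
    (Matrix.toLinearEquiv' M.transpose hMT).toContinuousLinearEquiv
  have hcle : (cle : ({i // i ∈ S} → ℝ) →L[ℝ] ({i // i ∈ S} → ℝ)) = D := by
    apply ContinuousLinearMap.coe_injective
    apply Module.Basis.ext (Pi.basisFun ℝ {i // i ∈ S})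
    intro i
    funext j
    have h1 : (Pi.basisFun ℝ {i // i ∈ S}) i = Pi.single i 1 := by
      simp [Pi.basisFun_apply]
    rw [h1]
    show (Matrix.toLin' M.transpose) (Pi.single i 1) j = D (Pi.single i 1) j
    rw [hDe, Matrix.toLin'_apply, Matrix.mulVec_single]
    simp [Matrix.transpose_apply]
  have hGs' : HasStrictFDerivAt G
      (cle : ({i // i ∈ S} → ℝ) →L[ℝ] ({i // i ∈ S} → ℝ)) y₀ := by
    rw [hcle]; exact hGs
  obtain ⟨N, hNopen, hNmem, hNinj⟩ := stmt13_inj hGs'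
  -- rewrite the objective function as L ∘ φ and compute its derivative
  have hgf : (fun y : {i // i ∈ S} → ℝ => L fun i => if h : i ∈ S then y ⟨i, h⟩ else θ₀ i)
      = fun y => L (φ y) := funext fun y => by rw [hφ y]
  have hfd : ∀ y : {i // i ∈ S} → ℝ, φ y ∈ Ω →
      fderiv ℝ (fun y : {i // i ∈ S} → ℝ =>
        L fun i => if h : i ∈ S then y ⟨i, h⟩ else θ₀ i) y = P (fderiv ℝ L (φ y)) := by
    intro y hy
    rw [hgf]
    have hLd : DifferentiableAt ℝ L (φ y) :=
      (hL.contDiffAt (hΩ.mem_nhds hy)).differentiableAt (by norm_num)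
    have hcomp : fderiv ℝ (fun y' => L (φ y')) y
        = (fderiv ℝ L (φ y)).comp (fderiv ℝ φ y) :=
      fderiv_comp y hLd (hφdiff y).differentiableAt
    rw [hcomp, (hφdiff y).fderiv]
    exact (hP _).symm
  have hy₀Ω : φ y₀ ∈ Ω := by rw [hφ0]; exact hθ₀
  have key : ∀ y₁ ∈ N ∩ φ ⁻¹' Ω, ∀ y₂ ∈ N ∩ φ ⁻¹' Ω,
      fderiv ℝ (fun y : {i // i ∈ S} → ℝ =>
        L fun i => if h : i ∈ S then y ⟨i, h⟩ else θ₀ i) y₁ = 0 →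
      fderiv ℝ (fun y : {i // i ∈ S} → ℝ =>
        L fun i => if h : i ∈ S then y ⟨i, h⟩ else θ₀ i) y₂ = 0 →
      y₁ = y₂ := by
    intro y₁ hy₁ y₂ hy₂ h1 h2
    rw [hfd y₁ hy₁.2] at h1
    rw [hfd y₂ hy₂.2] at h2
    refine hNinj y₁ hy₁.1 y₂ hy₂.1 ?_
    show Φ (P (fderiv ℝ L (φ y₁))) = Φ (P (fderiv ℝ L (φ y₂)))
    rw [h1, h2]
  refine ⟨N ∩ φ ⁻¹' Ω, hNopen.inter (hΩ.preimage hφcont), ⟨hNmem, hy₀Ω⟩, key, ?_⟩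
  intro y₁ hy₁ y₂ hy₂ h1 h2
  exact key y₁ hy₁ y₂ hy₂ h1.fderiv_eq_zero h2.fderiv_eq_zero
end

section
/- Let Ω ⊆ ℝ^p be open, let X be a finite set of data values with weights w : X → ℝ, let G = (G_1, …, G_N) : Ω → ℝ^N be twice continuously differentiable, and let M : X × ℝ^N → ℝ be twice continuously differentiable in its second argument. Define L(x, θ) = M(x, G(θ)). Fix θ₀ ∈ Ω and suppose the weighted score in G vanishes: Σ_{x∈X} w(x) · (∂M/∂g_l)(x, G(θ₀)) = 0 for each l = 1, …, N. Then the p×p matrix I(θ₀) with entries I(θ₀)_{ij} = −Σ_{x∈X} w(x) · (∂²/∂θ_i∂θ_j)[L(x, θ)]|_{θ=θ₀} satisfies I(θ₀) = −J^T B J, where J is the N×p Jacobian of G at θ₀ and B_{lk} = Σ_{x∈X} w(x)·(∂²M/∂g_l∂g_k)(x, G(θ₀)); in particular rank I(θ₀) ≤ N. -/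
private lemma clm_expand {n : ℕ} (T : (Fin n → ℝ) →L[ℝ] ℝ) (a : Fin n → ℝ) :
    T a = ∑ l, a l * T (Pi.single l 1) := by
  have h : a = ∑ l, a l • (Pi.single l (1:ℝ) : Fin n → ℝ) := by
    funext j
    simp [Pi.single_apply, Finset.sum_ite_eq]
  conv_lhs => rw [h]
  simp [smul_eq_mul]

/-- Equation (5) of the paper: if the log-likelihood factors through `N` scalar
functions, `L x θ = M x (G θ)`, and at `θ₀` the weighted score in `G` vanishes, then
the (weighted-expectation) Fisher information matrix
`I(θ₀)ᵢⱼ = -∑ₓ w x · ∂²L(x,·)/∂θᵢ∂θⱼ(θ₀)` equals `-(Jᵀ B J)` where `J` is the Jacobian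
of `G` at `θ₀` and `B` is the weighted Hessian of `M` in `G`; in particular
`rank I(θ₀) ≤ N`. -/
theorem stmt_14 {p N : ℕ} {Ω : Set (Fin p → ℝ)} (hΩ : IsOpen Ω)
    (X : Type*) [Fintype X] (w : X → ℝ)
    (G : (Fin p → ℝ) → (Fin N → ℝ)) (hG : ContDiffOn ℝ 2 G Ω)
    (M : X → (Fin N → ℝ) → ℝ) (hM : ∀ x, ContDiff ℝ 2 (M x))
    (L : X → (Fin p → ℝ) → ℝ) (hLdef : ∀ x θ, L x θ = M x (G θ))
    (θ₀ : Fin p → ℝ) (hθ₀ : θ₀ ∈ Ω)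
    (hscore : ∀ l : Fin N, ∑ x, w x * fderiv ℝ (M x) (G θ₀) (Pi.single l 1) = 0)
    (I : Matrix (Fin p) (Fin p) ℝ)
    (hIdef : ∀ i j, I i j = -∑ x, w x *
        fderiv ℝ (fun θ => fderiv ℝ (L x) θ (Pi.single j 1)) θ₀ (Pi.single i 1))
    (J : Matrix (Fin N) (Fin p) ℝ)
    (hJdef : ∀ l i, J l i = fderiv ℝ (fun θ => G θ l) θ₀ (Pi.single i 1))
    (B : Matrix (Fin N) (Fin N) ℝ)
    (hBdef : ∀ l k, B l k = ∑ x, w x *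
        fderiv ℝ (fun g => fderiv ℝ (M x) g (Pi.single k 1)) (G θ₀) (Pi.single l 1)) :
    I = -(J.transpose * B * J) ∧ I.rank ≤ N := by
  have hmem : Ω ∈ nhds θ₀ := hΩ.mem_nhds hθ₀
  have hGat : ∀ θ ∈ Ω, ContDiffAt ℝ 2 G θ := fun θ hθ => hG.contDiffAt (hΩ.mem_nhds hθ)
  have hGdiff : ∀ θ ∈ Ω, DifferentiableAt ℝ G θ := fun θ hθ =>
    (hGat θ hθ).differentiableAt (by norm_num)
  set g₀ := G θ₀ with hg₀
  -- differentiability of fderiv (M x)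
  have hMd : ∀ x, Differentiable ℝ (M x) := fun x => (hM x).differentiable (by norm_num)
  have hM1 : ∀ x, ContDiff ℝ 1 (fderiv ℝ (M x)) := fun x =>
    (hM x).fderiv_right (le_refl 2)
  have hMd2 : ∀ x, Differentiable ℝ (fderiv ℝ (M x)) := fun x =>
    (hM1 x).differentiable one_ne_zero
  -- first derivative identity on a neighborhood
  have hfd1 : ∀ x : X, ∀ θ ∈ Ω, fderiv ℝ (L x) θ
      = (fderiv ℝ (M x) (G θ)).comp (fderiv ℝ G θ) := by
    intro x θ hθ
    have hLx : L x = (M x) ∘ G := funext fun θ => hLdef x θ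
    rw [hLx]
    exact fderiv_comp θ ((hMd x) (G θ)) (hGdiff θ hθ)
  -- the key second derivative formula
  have key : ∀ (x : X) (i j : Fin p),
      fderiv ℝ (fun θ => fderiv ℝ (L x) θ (Pi.single j 1)) θ₀ (Pi.single i 1)
      = (fderiv ℝ (fderiv ℝ (M x)) g₀ (fderiv ℝ G θ₀ (Pi.single i 1)))
          (fderiv ℝ G θ₀ (Pi.single j 1))
        + fderiv ℝ (M x) g₀
            (fderiv ℝ (fun θ => fderiv ℝ G θ (Pi.single j 1)) θ₀ (Pi.single i 1)) := by
    intro x i j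
    have hEq : (fun θ => fderiv ℝ (L x) θ (Pi.single j 1))
        =ᶠ[nhds θ₀] (fun θ => (fderiv ℝ (M x) (G θ)) (fderiv ℝ G θ (Pi.single j 1))) := by
      filter_upwards [hmem] with θ hθ
      rw [hfd1 x θ hθ]; rfl
    rw [hEq.fderiv_eq]
    -- differentiability facts
    have hA : DifferentiableAt ℝ (fun θ => fderiv ℝ (M x) (G θ)) θ₀ :=
      ((hMd2 x) g₀).comp θ₀ (hGdiff θ₀ hθ₀)
    have hG1 : ContDiffAt ℝ 1 (fderiv ℝ G) θ₀ := (hGat θ₀ hθ₀).fderiv_right (le_refl 2)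
    have hψ : DifferentiableAt ℝ (fun θ => fderiv ℝ G θ (Pi.single j 1)) θ₀ :=
      (hG1.differentiableAt one_ne_zero).clm_apply (differentiableAt_const _)
    rw [fderiv_clm_apply hA hψ]
    simp only [ContinuousLinearMap.add_apply, ContinuousLinearMap.comp_apply,
      ContinuousLinearMap.flip_apply]
    have hcomp : fderiv ℝ (fun θ => fderiv ℝ (M x) (G θ)) θ₀
        = (fderiv ℝ (fderiv ℝ (M x)) g₀).comp (fderiv ℝ G θ₀) :=
      fderiv_comp θ₀ ((hMd2 x) g₀) (hGdiff θ₀ hθ₀)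
    rw [hcomp]
    simp [add_comm]
    rfl
  -- coordinates of G-Jacobian
  have hJcoord : ∀ (l : Fin N) (i : Fin p), (fderiv ℝ G θ₀ (Pi.single i 1)) l = J l i := by
    intro l i
    rw [hJdef]
    have : (fun θ => G θ l) = (ContinuousLinearMap.proj l : (Fin N → ℝ) →L[ℝ] ℝ) ∘ G := rfl
    rw [this, fderiv_comp θ₀ (ContinuousLinearMap.proj l).differentiableAt (hGdiff θ₀ hθ₀),
      ContinuousLinearMap.fderiv]
    rfl
  -- second derivative of M in coordinates
  have hD2 : ∀ (x : X) (l k : Fin N),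
      (fderiv ℝ (fderiv ℝ (M x)) g₀ (Pi.single l 1)) (Pi.single k 1)
      = fderiv ℝ (fun g => fderiv ℝ (M x) g (Pi.single k 1)) g₀ (Pi.single l 1) := by
    intro x l k
    rw [fderiv_clm_apply ((hMd2 x) g₀) (differentiableAt_const _)]
    simp
  -- main matrix identity
  have hmain : I = -(J.transpose * B * J) := by
    ext i j
    rw [hIdef i j]
    have hexp : ∀ x : X,
        fderiv ℝ (fun θ => fderiv ℝ (L x) θ (Pi.single j 1)) θ₀ (Pi.single i 1)
        = (∑ l, ∑ k, J l i * J k j *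
            fderiv ℝ (fun g => fderiv ℝ (M x) g (Pi.single k 1)) g₀ (Pi.single l 1))
          + ∑ l, (fderiv ℝ (fun θ => fderiv ℝ G θ (Pi.single j 1)) θ₀ (Pi.single i 1)) l
              * fderiv ℝ (M x) g₀ (Pi.single l 1) := by
      intro x
      rw [key x i j]
      congr 1
      · rw [clm_expand (fderiv ℝ (fderiv ℝ (M x)) g₀ (fderiv ℝ G θ₀ (Pi.single i 1)))]
        have hflip : ∀ k : Fin N,
            (fderiv ℝ (fderiv ℝ (M x)) g₀ (fderiv ℝ G θ₀ (Pi.single i 1))) (Pi.single k 1)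
            = ∑ l, J l i *
                fderiv ℝ (fun g => fderiv ℝ (M x) g (Pi.single k 1)) g₀ (Pi.single l 1) := by
          intro k
          have h := clm_expand ((fderiv ℝ (fderiv ℝ (M x)) g₀).flip (Pi.single k 1))
              (fderiv ℝ G θ₀ (Pi.single i 1))
          simp only [ContinuousLinearMap.flip_apply] at h
          rw [h]
          exact Finset.sum_congr rfl fun l _ => by rw [hJcoord, hD2]
        simp only [hflip, hJcoord, Finset.mul_sum]
        rw [Finset.sum_comm]
        exact Finset.sum_congr rfl fun l _ => Finset.sum_congr rfl fun k _ => by ring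
      · exact clm_expand _ _
    simp only [hexp, mul_add, Finset.sum_add_distrib]
    have hzero : ∑ x, w x * (∑ l,
        (fderiv ℝ (fun θ => fderiv ℝ G θ (Pi.single j 1)) θ₀ (Pi.single i 1)) l
          * fderiv ℝ (M x) g₀ (Pi.single l 1)) = 0 := by
      simp only [Finset.mul_sum]
      rw [Finset.sum_comm]
      refine Finset.sum_eq_zero fun l _ => ?_
      have h := hscore l
      calc ∑ x, w x * ((fderiv ℝ (fun θ => fderiv ℝ G θ (Pi.single j 1)) θ₀ (Pi.single i 1)) l
              * fderiv ℝ (M x) g₀ (Pi.single l 1))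
          = (fderiv ℝ (fun θ => fderiv ℝ G θ (Pi.single j 1)) θ₀ (Pi.single i 1)) l
              * ∑ x, w x * fderiv ℝ (M x) g₀ (Pi.single l 1) := by
            rw [Finset.mul_sum]
            exact Finset.sum_congr rfl fun x _ => by ring
        _ = 0 := by rw [h, mul_zero]
    rw [hzero, add_zero]
    have h1 : ∑ x, w x * (∑ l, ∑ k, J l i * J k j *
        fderiv ℝ (fun g => fderiv ℝ (M x) g (Pi.single k 1)) g₀ (Pi.single l 1))
        = (J.transpose * B * J) i j := by
      calc ∑ x, w x * (∑ l, ∑ k, J l i * J k j *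
            fderiv ℝ (fun g => fderiv ℝ (M x) g (Pi.single k 1)) g₀ (Pi.single l 1))
          = ∑ l, ∑ k, J l i * J k j * ∑ x, w x *
            fderiv ℝ (fun g => fderiv ℝ (M x) g (Pi.single k 1)) g₀ (Pi.single l 1) := by
            simp only [Finset.mul_sum]
            rw [Finset.sum_comm]
            refine Finset.sum_congr rfl fun l _ => ?_
            rw [Finset.sum_comm]
            exact Finset.sum_congr rfl fun k _ =>
              Finset.sum_congr rfl fun x _ => by ring
        _ = (J.transpose * B * J) i j := by
            simp only [Matrix.mul_apply, Matrix.transpose_apply, hBdef,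
              Finset.sum_mul, Finset.mul_sum]
            rw [Finset.sum_comm]
            exact Finset.sum_congr rfl fun l _ =>
              Finset.sum_congr rfl fun k _ => Finset.sum_congr rfl fun x _ => by ring
    rw [h1, Matrix.neg_apply]
  refine ⟨hmain, ?_⟩
  rw [hmain]
  have h2 : -(J.transpose * B * J) = (-(J.transpose * B)) * J := by
    rw [Matrix.neg_mul]
  rw [h2]
  calc ((-(J.transpose * B)) * J).rank ≤ (-(J.transpose * B)).rank :=
        Matrix.rank_mul_le_left _ _
    _ ≤ Fintype.card (Fin N) := Matrix.rank_le_card_width _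
    _ = N := Fintype.card_fin N
end
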